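/- For every n ≥ 3, the automorphism group of C_{2^n} × C_2 is isomorphic to the presented group on four generators c, d, e, f with relations c^4 = 1, d^2 = 1, d^{-1} c d = c^{-1}, e^{2^{n-2}} = 1, c^2 e^{2^{n-3}} = 1, [c,e] = 1, [d,e] = 1, f^2 = 1, [c,f] = 1, [d,f] = 1, [e,f] = 1. -/

import Mathlib

open scoped commutatorElement

/-- Relators for the presented group on generators `c, d, e, f` (indexed `0, 1, 2, 3`):
`c^4 = 1`, `d^2 = 1`, `d⁻¹cd = c⁻¹`, `e^(2^(n-2)) = 1`, `c^2 e^(2^(n-3)) = 1`,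
`[c,e] = [d,e] = 1`, `f^2 = 1`, `[c,f] = [d,f] = [e,f] = 1`. -/
def autRels (n : ℕ) : Set (FreeGroup (Fin 4)) :=
  let c : FreeGroup (Fin 4) := FreeGroup.of 0
  let d : FreeGroup (Fin 4) := FreeGroup.of 1
  let e : FreeGroup (Fin 4) := FreeGroup.of 2
  let f : FreeGroup (Fin 4) := FreeGroup.of 3
  {c ^ 4, d ^ 2, d⁻¹ * c * d * c, e ^ (2 ^ (n - 2)), c ^ 2 * e ^ (2 ^ (n - 3)),
   ⁅c, e⁆, ⁅d, e⁆, f ^ 2, ⁅c, f⁆, ⁅d, f⁆, ⁅e, f⁆}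

section Dev
variable (m : ℕ)

instance addAutGroupMul (A : Type*) [Add A] : Group (AddAut A) where
  mul g h := AddEquiv.trans h g
  one := AddEquiv.refl _
  inv := AddEquiv.symm
  mul_assoc _ _ _ := rfl
  one_mul _ := rfl
  mul_one _ := rfl
  inv_mul_cancel := AddEquiv.self_trans_symm

lemma addAut_mul_apply {A : Type*} [Add A] (e₁ e₂ : AddAut A) (a : A) :
    (e₁ * e₂) a = e₁ (e₂ a) := rfl

@[simp]
lemma addAut_one_apply {A : Type*} [Add A] (a : A) : (1 : AddAut A) a = a := rfl

abbrev Zn (m : ℕ) := ZMod (2^(m+3))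
abbrev Z2 := ZMod 2
abbrev MM (m : ℕ) := Zn m × Z2

lemma hNpos : 0 < 2^(m+3) := Nat.pow_pos (by norm_num)

instance : NeZero (2^(m+3)) := ⟨(hNpos m).ne'⟩

lemma cast_two_pow_zero : ((2:Zn m)^(m+3)) = 0 := by
  have := ZMod.natCast_self (2^(m+3))
  push_cast at this
  exact this

lemma half_add_half : (2^(m+2) : Zn m) + 2^(m+2) = 0 := by
  have h : (2^(m+2) : Zn m) + 2^(m+2) = 2^(m+3) := by ring
  rw [h, cast_two_pow_zero]

lemma half_mul_half : (2^(m+2) : Zn m) * 2^(m+2) = 0 := by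
  have h : (2^(m+2) : Zn m) * 2^(m+2) = 2^(m+3) * 2^(m+1) := by ring
  rw [h, cast_two_pow_zero, zero_mul]

lemma half_ne_zero : (2^(m+2) : Zn m) ≠ 0 := by
  have : ((2^(m+2) : ℕ) : Zn m) ≠ 0 := by
    rw [Ne, ZMod.natCast_eq_zero_iff]
    intro h
    have h1 := Nat.le_of_dvd (Nat.pow_pos (by norm_num)) h
    have h2 : (2:ℕ)^(m+2) < 2^(m+3) := Nat.pow_lt_pow_succ (by norm_num)
    omega
  simpa using this

lemma five_pow_nat (k : ℕ) : ∃ t, 5^(2^k) = 1 + 2^(k+2) + 2^(k+3)*t := by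
  induction k with
  | zero => exact ⟨0, by norm_num⟩
  | succ k ih =>
    obtain ⟨t, ht⟩ := ih
    refine ⟨2^k + 2^(k+2)*t^2 + t + 2^(k+2)*t, ?_⟩
    have h1 : 2^(k+1) = 2^k * 2 := by rw [pow_succ]
    rw [h1, pow_mul, ht]
    ring

lemma five_pow_half : (5 : Zn m)^(2^m) = 1 + 2^(m+2) := by
  obtain ⟨t, ht⟩ := five_pow_nat m
  have : ((5^(2^m) : ℕ) : Zn m) = ((1 + 2^(m+2) + 2^(m+3)*t : ℕ) : Zn m) := by rw [ht]
  push_cast at this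
  rw [cast_two_pow_zero] at this
  simpa using this

lemma five_pow_one : (5 : Zn m)^(2^(m+1)) = 1 := by
  have h1 : 2^(m+1) = 2^m * 2 := by rw [pow_succ]
  rw [h1, pow_mul, five_pow_half]
  have h2 : (1 + (2^(m+2):Zn m))^2 = 1 + ((2^(m+2)+2^(m+2)) + 2^(m+2)*2^(m+2)) := by ring
  rw [h2, half_add_half, half_mul_half, add_zero, add_zero]

/-- reduction mod 2 -/
def pr : Zn m →+* Z2 := ZMod.castHom (dvd_pow_self 2 (Nat.succ_ne_zero _)) Z2

/-- injection of ZMod 2 as {0, 2^(m+2)} -/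
def io : Z2 →+ Zn m :=
  ZMod.lift 2 ⟨zmultiplesHom (Zn m) (2^(m+2)), by
    simp [zmultiplesHom]
    have := half_add_half m
    push_cast
    rw [two_mul]
    exact this⟩

lemma io_zero : io m 0 = 0 := map_zero _

lemma io_one : io m 1 = 2^(m+2) := by
  have : ((1:ℤ) : Z2) = 1 := by norm_num
  rw [← this, io, ZMod.lift_coe]
  simp [zmultiplesHom]

lemma z2_cases (y : Z2) : y = 0 ∨ y = 1 := by revert y; decide

lemma io_add_io (y : Z2) : io m y + io m y = 0 := by
  rcases z2_cases y with h | h <;> subst h <;>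
    simp [io_zero, io_one, half_add_half]

lemma pr_two_pow (k : ℕ) : pr m (2^(k+1) : Zn m) = 0 := by
  rw [map_pow]
  have h2 : pr m 2 = 0 := by
    have : ((2:ℕ) : Zn m) = (2 : Zn m) := by push_cast; ring
    rw [← this, map_natCast]
    decide
  rw [h2, zero_pow (Nat.succ_ne_zero k)]

lemma pr_io (y : Z2) : pr m (io m y) = 0 := by
  rcases z2_cases y with h | h <;> subst h
  · simp [io_zero]
  · rw [io_one]; exact pr_two_pow m (m+1)

lemma zmod_hom_ext {q : ℕ} [NeZero q] {A : Type*} [AddCommGroup A]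
    (f g : ZMod q →+ A) (h : f 1 = g 1) : f = g := by
  ext x
  have hx : ((x.val : ℕ) : ZMod q) = x := by rw [ZMod.natCast_val, ZMod.cast_id]
  have h1 : x = x.val • (1 : ZMod q) := by
    rw [nsmul_eq_mul, mul_one, hx]
  rw [h1, map_nsmul, map_nsmul, h]

lemma half_mul (x : Zn m) : 2^(m+2) * x = io m (pr m x) := by
  have : (AddMonoidHom.mulLeft (2^(m+2) : Zn m)) =
      (io m).comp (pr m).toAddMonoidHom := by
    apply zmod_hom_ext
    simp [AddMonoidHom.mulLeft, io_one]
  exact DFunLike.congr_fun this x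

lemma z2_add_self (a : Z2) : a + a = 0 := by revert a; decide

/-- scaling automorphism on the first factor -/
def scalEquiv (u : (Zn m)ˣ) : MM m ≃+ MM m where
  toFun p := (u * p.1, p.2)
  invFun p := ((u⁻¹ : (Zn m)ˣ) * p.1, p.2)
  left_inv p := by simp [mul_assoc, ← Units.val_mul]
  right_inv p := by simp [mul_assoc, ← Units.val_mul]
  map_add' p q := by simp [Prod.ext_iff, mul_add]

def scal : (Zn m)ˣ →* AddAut (MM m) where
  toFun := scalEquiv m
  map_one' := by ext p <;> simp [scalEquiv]
  map_mul' u v := by ext p <;> simp [scalEquiv, addAut_mul_apply, mul_assoc]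

lemma scal_apply (u : (Zn m)ˣ) (p : MM m) : scal m u p = (u * p.1, p.2) := rfl

/-- d : (x,y) ↦ (x + 2^(m+2) y, y) -/
def DD : AddAut (MM m) where
  toFun p := (p.1 + io m p.2, p.2)
  invFun p := (p.1 + io m p.2, p.2)
  left_inv p := by simp [add_assoc, io_add_io]
  right_inv p := by simp [add_assoc, io_add_io]
  map_add' p q := by simp [Prod.ext_iff, map_add]; ring

lemma DD_apply (p : MM m) : DD m p = (p.1 + io m p.2, p.2) := rfl

/-- τ : (x,y) ↦ (x, x̄ + y) -/
def tt : AddAut (MM m) where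
  toFun p := (p.1, pr m p.1 + p.2)
  invFun p := (p.1, pr m p.1 + p.2)
  left_inv p := by
    simp [Prod.ext_iff]
    rw [← add_assoc, z2_add_self, zero_add]
  right_inv p := by
    simp [Prod.ext_iff]
    rw [← add_assoc, z2_add_self, zero_add]
  map_add' p q := by simp [Prod.ext_iff, map_add]; ring

lemma tt_apply (p : MM m) : tt m p = (p.1, pr m p.1 + p.2) := rfl

def CC : AddAut (MM m) := tt m * DD m

lemma CC_apply (p : MM m) : CC m p = (p.1 + io m p.2, pr m p.1 + p.2) := by
  show tt m (DD m p) = _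
  rw [DD_apply, tt_apply]
  simp [map_add, pr_io]

/-- hom out of MM determined by values at (1,0) and (0,1) -/
lemma mm_hom_ext {A : Type*} [AddCommGroup A] (f g : MM m →+ A)
    (h1 : f (1,0) = g (1,0)) (h2 : f (0,1) = g (0,1)) : f = g := by
  have e1 : f.comp (AddMonoidHom.inl (Zn m) Z2) = g.comp (AddMonoidHom.inl (Zn m) Z2) :=
    zmod_hom_ext _ _ (by simpa using h1)
  have e2 : f.comp (AddMonoidHom.inr (Zn m) Z2) = g.comp (AddMonoidHom.inr (Zn m) Z2) :=
    zmod_hom_ext _ _ (by simpa using h2)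
  ext p
  have hp : p = ((p.1, 0) : MM m) + (0, p.2) := by simp
  rw [hp, map_add, map_add]
  have c1 := DFunLike.congr_fun e1 p.1
  have c2 := DFunLike.congr_fun e2 p.2
  simp only [AddMonoidHom.comp_apply, AddMonoidHom.inl_apply, AddMonoidHom.inr_apply] at c1 c2
  rw [c1, c2]

lemma aut_ext (f g : AddAut (MM m))
    (h1 : f (1,0) = g (1,0)) (h2 : f (0,1) = g (0,1)) : f = g := by
  have := mm_hom_ext m f.toAddMonoidHom g.toAddMonoidHom h1 h2
  exact AddEquiv.ext fun x => DFunLike.congr_fun this x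

/-- the unit 5 -/
def u5 : (Zn m)ˣ :=
  ZMod.unitOfCoprime 5 (Nat.Coprime.pow_right _ (by norm_num))

lemma u5_val : ((u5 m : Zn m)) = 5 := by
  have := ZMod.coe_unitOfCoprime (n := 2^(m+3)) 5 (Nat.Coprime.pow_right _ (by norm_num))
  rw [u5, this]; norm_num

def u0 : (Zn m)ˣ := (u5 m)^(2^m)

lemma u0_val : ((u0 m : Zn m)) = 1 + 2^(m+2) := by
  rw [u0, Units.val_pow_eq_pow_val, u5_val, five_pow_half]

lemma u0_sq : (u0 m)^2 = 1 := by
  apply Units.ext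
  rw [Units.val_pow_eq_pow_val, u0_val, Units.val_one]
  have h2 : (1 + (2^(m+2):Zn m))^2 = 1 + ((2^(m+2)+2^(m+2)) + 2^(m+2)*2^(m+2)) := by ring
  rw [h2, half_add_half, half_mul_half, add_zero, add_zero]

lemma u0_ne_one : u0 m ≠ 1 := by
  intro h
  have := congrArg (Units.val) h
  rw [u0_val, Units.val_one] at this
  exact half_ne_zero m (by linear_combination this)

lemma u5_pow_top : (u5 m)^(2^(m+1)) = 1 := by
  apply Units.ext
  rw [Units.val_pow_eq_pow_val, u5_val, five_pow_one, Units.val_one]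

lemma orderOf_u5 : orderOf (u5 m) = 2^(m+1) := by
  have hd := orderOf_dvd_of_pow_eq_one (u5_pow_top m)
  rcases (Nat.dvd_prime_pow Nat.prime_two).mp hd with ⟨j, hj, hEq⟩
  rcases Nat.lt_or_ge j (m+1) with hlt | hge
  · exfalso
    have hdvd : orderOf (u5 m) ∣ 2^m := by
      rw [hEq]; exact pow_dvd_pow 2 (by omega)
    have : (u5 m)^(2^m) = 1 := orderOf_dvd_iff_pow_eq_one.mp hdvd
    exact u0_ne_one m this
  · rw [hEq]; congr 1; omega

/-- commutation of scalars with DD/tt/CC -/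
lemma scal_comm_DD (u : (Zn m)ˣ) (hval : (u : Zn m) * 2^(m+2) = 2^(m+2)) :
    scal m u * DD m = DD m * scal m u := by
  apply aut_ext <;>
    simp only [addAut_mul_apply, scal_apply, DD_apply, io_zero, io_one,
      add_zero, mul_zero, mul_one, zero_add, Prod.ext_iff, hval]

lemma scal_comm_tt (u : (Zn m)ˣ) (hpr : pr m (u : Zn m) = 1) :
    scal m u * tt m = tt m * scal m u := by
  apply aut_ext <;>
    simp only [addAut_mul_apply, scal_apply, tt_apply, Prod.ext_iff,
      map_mul, hpr, mul_zero, mul_one, map_zero, map_one, one_mul, zero_add, add_zero]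

lemma scal_comm_CC (u : (Zn m)ˣ) (hval : (u : Zn m) * 2^(m+2) = 2^(m+2))
    (hpr : pr m (u : Zn m) = 1) : scal m u * CC m = CC m * scal m u := by
  rw [CC, ← mul_assoc, scal_comm_tt m u hpr, mul_assoc, scal_comm_DD m u hval, mul_assoc]

lemma u5_val_prop : ((u5 m : Zn m)) * 2^(m+2) = 2^(m+2) := by
  rw [u5_val]
  have : (5 : Zn m) * 2^(m+2) = 2^(m+2) + 2^(m+3)*2 := by ring
  rw [this, cast_two_pow_zero, zero_mul, add_zero]

lemma u5_pr : pr m ((u5 m : Zn m)) = 1 := by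
  rw [u5_val]
  have : ((5:ℕ) : Zn m) = (5 : Zn m) := by push_cast; ring
  rw [← this, map_natCast]
  decide

lemma neg_one_val_prop : (((-1 : (Zn m)ˣ) : Zn m)) * 2^(m+2) = 2^(m+2) := by
  rw [Units.val_neg, Units.val_one, neg_mul, one_mul, neg_eq_iff_add_eq_zero, half_add_half]

lemma neg_one_pr : pr m (((-1 : (Zn m)ˣ) : Zn m)) = 1 := by
  rw [Units.val_neg, Units.val_one, map_neg, map_one]
  decide

/-- D² = 1 -/
lemma DD_sq : DD m * DD m = 1 := by
  apply aut_ext <;> simp [addAut_mul_apply, DD_apply, io_zero, io_one, half_add_half]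

lemma tt_sq : tt m * tt m = 1 := by
  apply aut_ext <;>
    simp [addAut_mul_apply, tt_apply, map_one, map_zero, z2_add_self]

/-- C² = scal u0 -/
lemma CC_sq : CC m * CC m = scal m (u0 m) := by
  apply AddEquiv.ext
  rintro ⟨x, y⟩
  simp only [addAut_mul_apply, CC_apply, scal_apply, u0_val]
  simp only [map_add, pr_io, add_zero, Prod.mk.injEq]
  constructor
  · linear_combination io_add_io m y - half_mul m x
  · linear_combination z2_add_self (pr m x)

/-- CDC = D, i.e. relator d⁻¹ c d c -/
lemma CDC : CC m * DD m * CC m = DD m := by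
  apply AddEquiv.ext
  rintro ⟨x, y⟩
  simp only [addAut_mul_apply, CC_apply, DD_apply]
  simp only [map_add, pr_io, add_zero, Prod.mk.injEq]
  constructor
  · linear_combination io_add_io m y + io_add_io m (pr m x)
  · linear_combination z2_add_self (pr m x)

lemma half_mul_io (y : Z2) : (2^(m+2) : Zn m) * io m y = 0 := by
  rcases z2_cases y with h | h <;> subst h
  · rw [io_zero, mul_zero]
  · rw [io_one]; exact half_mul_half m

/-- τ = scal u0 * D * C -/
lemma tt_decomp : scal m (u0 m) * DD m * CC m = tt m := by
  apply AddEquiv.ext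
  rintro ⟨x, y⟩
  simp only [addAut_mul_apply, CC_apply, DD_apply, scal_apply, tt_apply, u0_val]
  simp only [map_add, pr_io, add_zero, mul_add, Prod.mk.injEq]
  constructor
  · linear_combination half_mul m x + io_add_io m (pr m x) + io_add_io m y +
      2 * half_mul_io m y + half_mul_io m (pr m x)
  · trivial

def gens : Fin 4 → AddAut (MM m) := ![CC m, DD m, scal m (u5 m), scal m (-1)]

lemma sub32 : m + 3 - 2 = m + 1 := by omega
lemma sub33 : m + 3 - 3 = m := by omega

lemma CC_pow_four : (CC m)^4 = 1 := by
  have h4 : (4:ℕ) = 2*2 := rfl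
  rw [h4, pow_mul, show (CC m)^2 = CC m * CC m from pow_two _, CC_sq, ← map_pow, u0_sq, map_one]

lemma hrels : ∀ r ∈ autRels (m+3), FreeGroup.lift (gens m) r = 1 := by
  intro r hr
  simp only [autRels, Set.mem_insert_iff, Set.mem_singleton_iff, sub32, sub33] at hr
  rcases hr with h|h|h|h|h|h|h|h|h|h|h <;> subst h <;>
    simp only [map_pow, map_mul, map_inv, map_commutatorElement, FreeGroup.lift_apply_of,
      gens, Matrix.cons_val_zero, Matrix.cons_val_one, Matrix.head_cons,
      Matrix.cons_val_two, Matrix.tail_cons, Matrix.cons_val_three]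
  · exact CC_pow_four m
  · rw [show (DD m)^2 = DD m * DD m from pow_two _, DD_sq]
  · rw [show (DD m)⁻¹ * CC m * DD m * CC m = (DD m)⁻¹ * (CC m * DD m * CC m) by group,
      CDC, inv_mul_cancel]
  · rw [← map_pow, u5_pow_top, map_one]
  · rw [show (CC m)^2 = CC m * CC m from pow_two _, CC_sq, ← map_pow]
    have : (u5 m)^(2^m) = u0 m := rfl
    rw [this, ← map_mul, ← pow_two, u0_sq, map_one]
  · rw [commutatorElement_eq_one_iff_commute]
    exact (scal_comm_CC m _ (u5_val_prop m) (u5_pr m)).symm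
  · rw [commutatorElement_eq_one_iff_commute]
    exact (scal_comm_DD m _ (u5_val_prop m)).symm
  · rw [← map_pow]
    have : (-1 : (Zn m)ˣ)^2 = 1 := by simp
    rw [this, map_one]
  · rw [commutatorElement_eq_one_iff_commute]
    exact (scal_comm_CC m _ (neg_one_val_prop m) (neg_one_pr m)).symm
  · rw [commutatorElement_eq_one_iff_commute]
    exact (scal_comm_DD m _ (neg_one_val_prop m)).symm
  · rw [commutatorElement_eq_one_iff_commute]
    show scal m (u5 m) * scal m (-1) = scal m (-1) * scal m (u5 m)
    rw [← map_mul, ← map_mul, mul_comm]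

def phi : PresentedGroup (autRels (m+3)) →* AddAut (MM m) :=
  PresentedGroup.toGroup (hrels m)

lemma z2_cast_eq_one (k : ℕ) (h : (k : Z2) = 1) : k % 2 = 1 := by
  rcases Nat.even_or_odd k with he | ho
  · exfalso
    obtain ⟨t, ht⟩ := he
    subst ht
    rw [Nat.cast_add] at h
    rw [z2_add_self] at h
    exact absurd h (by decide)
  · exact Nat.odd_iff.mp ho

lemma cast_val_self (x : Zn m) : ((x.val : ℕ) : Zn m) = x := by
  rw [ZMod.natCast_val, ZMod.cast_id]

lemma z2_cast_val_self (y : Z2) : ((y.val : ℕ) : Z2) = y := by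
  rw [ZMod.natCast_val, ZMod.cast_id]

lemma pr_natCast_val' (x : Zn m) : ((x.val : ℕ) : Z2) = pr m x := by
  rw [ZMod.natCast_val]
  exact (ZMod.castHom_apply x).symm

lemma odd_isUnit (p : Zn m) (hp : pr m p = 1) : IsUnit p := by
  rw [← cast_val_self m p, ZMod.isUnit_iff_coprime]
  apply Nat.Coprime.pow_right
  have hodd : (p.val : Z2) = 1 := by rw [pr_natCast_val']; exact hp
  have := z2_cast_eq_one (p.val) hodd
  rw [Nat.coprime_two_right]
  exact Nat.odd_iff.mpr this

lemma two_torsion (r : Zn m) (h : r + r = 0) : ∃ t : Z2, r = io m t := by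
  have hcast : ((r.val + r.val : ℕ) : Zn m) = 0 := by
    push_cast
    rw [cast_val_self]
    exact h
  have hdvd : 2^(m+3) ∣ r.val + r.val := by
    rw [← ZMod.natCast_eq_zero_iff]; exact hcast
  obtain ⟨w, hw⟩ := hdvd
  have h3 : r.val + r.val = 2*(2^(m+2)*w) := by rw [hw]; ring
  have hr : r.val = 2^(m+2) * w := by omega
  refine ⟨pr m ((w : ℕ) : Zn m), ?_⟩
  rw [← half_mul, ← cast_val_self m r, hr]
  push_cast
  ring

lemma expand (g : AddAut (MM m)) (x : Zn m) (y : Z2) :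
    g (x,y) = x.val • g (1,0) + y.val • g (0,1) := by
  have h1 : x.val • ((1,0) : MM m) = (x, 0) := by
    have h : x.val • ((1,0) : MM m) = (x.val • (1:Zn m), x.val • (0:Z2)) := rfl
    rw [h, smul_zero, nsmul_eq_mul, mul_one, cast_val_self]
  have h2 : y.val • ((0,1) : MM m) = (0, y) := by
    have h : y.val • ((0,1) : MM m) = (y.val • (0:Zn m), y.val • (1:Z2)) := rfl
    rw [h, smul_zero, nsmul_eq_mul, mul_one, z2_cast_val_self]
  calc g (x,y) = g (x.val • ((1,0):MM m) + y.val • ((0,1):MM m)) := by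
        rw [h1, h2, Prod.mk_add_mk, add_zero, zero_add]
    _ = x.val • g (1,0) + y.val • g (0,1) := by rw [map_add, map_nsmul, map_nsmul]

lemma classify (g : AddAut (MM m)) :
    ∃ (u : (Zn m)ˣ) (b c : ℕ), g = scal m u * (DD m)^b * (tt m)^c := by
  set P := g (1,0) with hP
  set Q := g (0,1) with hQ
  have hg1 : g (1,0) = (P.1, P.2) := by rw [← hP]
  have hg2 : g (0,1) = (Q.1, Q.2) := by rw [← hQ]
  -- Q is 2-torsion
  have hQ2 : Q + Q = 0 := by
    rw [hQ, ← map_add]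
    have : ((0,1) : MM m) + (0,1) = (0,0) := by
      rw [Prod.ext_iff]; constructor
      · simp
      · show (1:Z2) + 1 = 0; decide
    rw [this]
    exact map_zero g
  obtain ⟨t, ht⟩ := two_torsion m Q.1 (by
    have := congrArg Prod.fst hQ2
    simpa using this)
  have hprQ : pr m Q.1 = 0 := by rw [ht]; exact pr_io m t
  -- P.1 is odd
  have hp : pr m P.1 = 1 := by
    obtain ⟨v, hv⟩ := g.surjective (1,0)
    have hexp := expand m g v.1 v.2
    rw [Prod.mk.eta] at hexp
    rw [hv] at hexp
    have h1 : (1 : Zn m) = v.1.val • P.1 + v.2.val • Q.1 := by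
      have := congrArg Prod.fst hexp
      simpa using this
    have h2 := congrArg (pr m) h1
    rw [map_one, map_add, map_nsmul, map_nsmul, nsmul_eq_mul, nsmul_eq_mul, hprQ,
      mul_zero, add_zero] at h2
    rcases z2_cases (pr m P.1) with h0 | h1'
    · rw [h0, mul_zero] at h2; exact absurd h2 (by decide)
    · exact h1'
  have hu0 := odd_isUnit m P.1 hp
  -- Q.2 = 1
  have hs : Q.2 = 1 := by
    rcases z2_cases Q.2 with hq0 | hq1
    · exfalso
      set u := hu0.unit with hudef
      have huval : (u : Zn m) = P.1 := hu0.unit_spec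
      set x0 : Zn m := Q.1 * ↑u⁻¹ with hx0
      have hgx0 : g (x0, 0) = (Q.1, 0) := by
        rw [expand]
        simp only [ZMod.val_zero, zero_smul, add_zero]
        rw [Prod.ext_iff]
        constructor
        · simp only [Prod.smul_fst]
          rw [nsmul_eq_mul, ZMod.natCast_val, ZMod.cast_id, hx0, ← hP]
          rw [← huval, Units.inv_mul_cancel_right]
        · simp only [Prod.smul_snd]
          rw [nsmul_eq_mul, pr_natCast_val']
          rw [hx0, map_mul, hprQ, zero_mul, zero_mul]
      have : g (x0, 0) = g (0, 1) := by
        rw [hgx0, hg2, hq0, Prod.ext_iff]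
        exact ⟨rfl, rfl⟩
      have h9 := g.injective this
      exact absurd (show (0:Z2) = 1 from congrArg Prod.snd h9) (by decide)
    · exact hq1
  have hQ1 : g (0,1) = (io m t, 1) := by rw [hg2, ht, hs]
  have huv := hu0.unit_spec
  have hmul : (2^(m+2):Zn m) * P.1 = 2^(m+2) := by rw [half_mul, hp, io_one]
  rcases z2_cases t with ht0 | ht1 <;> rcases z2_cases P.2 with hq0 | hq1
  · -- t = 0, P.2 = 0 : g = scal u
    refine ⟨hu0.unit, 0, 0, aut_ext m _ _ ?_ ?_⟩
    · rw [hg1, hq0]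
      simp only [pow_zero, mul_one, scal_apply, huv]
    · rw [hQ1, ht0, io_zero]
      simp only [pow_zero, mul_one, scal_apply]
      rw [Prod.mk.injEq]
      exact ⟨(mul_zero _).symm, rfl⟩
  · -- t = 0, P.2 = 1 : g = scal u * tt
    refine ⟨hu0.unit, 0, 1, aut_ext m _ _ ?_ ?_⟩
    · rw [hg1, hq1]
      simp only [pow_zero, pow_one, mul_one, one_mul, addAut_mul_apply, tt_apply,
        scal_apply, map_one, add_zero, huv]
    · rw [hQ1, ht0, io_zero]
      simp only [pow_zero, pow_one, mul_one, one_mul, addAut_mul_apply, tt_apply,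
        scal_apply, map_zero, zero_add]
      rw [Prod.mk.injEq]
      exact ⟨(mul_zero _).symm, rfl⟩
  · -- t = 1, P.2 = 0 : g = scal u * DD
    refine ⟨hu0.unit, 1, 0, aut_ext m _ _ ?_ ?_⟩
    · rw [hg1, hq0]
      simp only [pow_zero, pow_one, mul_one, one_mul, addAut_mul_apply, DD_apply,
        scal_apply, io_zero, add_zero, huv]
    · rw [hQ1, ht1, io_one]
      simp only [pow_zero, pow_one, mul_one, one_mul, addAut_mul_apply, DD_apply,
        scal_apply, io_one, zero_add, huv]
      rw [Prod.mk.injEq]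
      refine ⟨?_, rfl⟩
      linear_combination -hmul
  · -- t = 1, P.2 = 1 : g = scal u' * DD * tt
    have hp2 : pr m (P.1 + 2^(m+2)) = 1 := by
      rw [map_add, hp, pr_two_pow m (m+1), add_zero]
    have hu2 := odd_isUnit m _ hp2
    have huv2 := hu2.unit_spec
    refine ⟨hu2.unit, 1, 1, aut_ext m _ _ ?_ ?_⟩
    · rw [hg1, hq1]
      simp only [pow_one, addAut_mul_apply, tt_apply, DD_apply, scal_apply,
        map_one, add_zero, io_one, huv2]
      rw [Prod.mk.injEq]
      refine ⟨?_, rfl⟩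
      linear_combination -(hmul + half_add_half m + half_mul_half m)
    · rw [hQ1, ht1, io_one]
      simp only [pow_one, addAut_mul_apply, tt_apply, DD_apply, scal_apply,
        map_zero, zero_add, io_one, huv2]
      rw [Prod.mk.injEq]
      refine ⟨?_, rfl⟩
      linear_combination -(hmul + half_mul_half m)

abbrev PG (m : ℕ) := PresentedGroup (autRels (m+3))

def pc : PG m := PresentedGroup.of 0
def pd : PG m := PresentedGroup.of 1
def pe : PG m := PresentedGroup.of 2
def pf : PG m := PresentedGroup.of 3

lemma mk_rel {r : FreeGroup (Fin 4)} (hr : r ∈ autRels (m+3)) :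
    PresentedGroup.mk (autRels (m+3)) r = 1 :=
  (QuotientGroup.eq_one_iff r).mpr (Subgroup.subset_normalClosure hr)

lemma pc4 : (pc m)^4 = 1 := by
  have h := mk_rel m (show (FreeGroup.of 0 : FreeGroup (Fin 4))^4 ∈ autRels (m+3) by
    simp [autRels])
  rwa [map_pow] at h

lemma pd2 : (pd m)^2 = 1 := by
  have h := mk_rel m (show (FreeGroup.of 1 : FreeGroup (Fin 4))^2 ∈ autRels (m+3) by
    simp [autRels])
  rwa [map_pow] at h

lemma pf2 : (pf m)^2 = 1 := by
  have h := mk_rel m (show (FreeGroup.of 3 : FreeGroup (Fin 4))^2 ∈ autRels (m+3) by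
    simp [autRels])
  rwa [map_pow] at h

lemma peN : (pe m)^(2^(m+1)) = 1 := by
  have h := mk_rel m (show (FreeGroup.of 2 : FreeGroup (Fin 4))^(2^(m+3-2)) ∈ autRels (m+3) by
    simp [autRels])
  rw [map_pow] at h
  rwa [sub32] at h

lemma pce : (pc m)^2 * (pe m)^(2^m) = 1 := by
  have h := mk_rel m (show (FreeGroup.of 0 : FreeGroup (Fin 4))^2 *
      (FreeGroup.of 2)^(2^(m+3-3)) ∈ autRels (m+3) by simp [autRels])
  rw [map_mul, map_pow, map_pow] at h
  rwa [sub33] at h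

lemma pdcdc : (pd m)⁻¹ * pc m * pd m * pc m = 1 := by
  have h := mk_rel m (show (FreeGroup.of 1 : FreeGroup (Fin 4))⁻¹ * FreeGroup.of 0 *
      FreeGroup.of 1 * FreeGroup.of 0 ∈ autRels (m+3) by simp [autRels])
  rwa [map_mul, map_mul, map_mul, map_inv] at h

lemma comm_of_rel {a b : Fin 4}
    (hr : (⁅FreeGroup.of a, FreeGroup.of b⁆ : FreeGroup (Fin 4)) ∈ autRels (m+3)) :
    Commute (PresentedGroup.of a : PG m) (PresentedGroup.of b) := by
  have h := mk_rel m hr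
  rw [map_commutatorElement] at h
  exact commutatorElement_eq_one_iff_commute.mp h

lemma hce : Commute (pc m) (pe m) := comm_of_rel m (by simp [autRels])
lemma hde : Commute (pd m) (pe m) := comm_of_rel m (by simp [autRels])
lemma hcf : Commute (pc m) (pf m) := comm_of_rel m (by simp [autRels])
lemma hdf : Commute (pd m) (pf m) := comm_of_rel m (by simp [autRels])
lemma hef : Commute (pe m) (pf m) := comm_of_rel m (by simp [autRels])

lemma pe_half_sq : ((pe m)^(2^m))^2 = 1 := by
  rw [← pow_mul]
  have : 2^m * 2 = 2^(m+1) := by rw [pow_succ]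
  rw [this, peN]

lemma pc_sq : (pc m)^2 = (pe m)^(2^m) := by
  have h1 : (pc m)^2 = ((pe m)^(2^m))⁻¹ := eq_inv_of_mul_eq_one_left (by
    rw [← pce m])
  rw [h1]
  exact inv_eq_of_mul_eq_one_right (by rw [← pow_add]; rw [← two_mul, ← pow_succ']; exact peN m)

lemma pc_inv : (pc m)⁻¹ = pc m * (pe m)^(2^m) := by
  have : pc m * (pc m * (pe m)^(2^m)) = 1 := by
    rw [← mul_assoc, ← pow_two, pce]
  exact inv_eq_of_mul_eq_one_right this

lemma pd_inv : (pd m)⁻¹ = pd m :=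
  inv_eq_of_mul_eq_one_right (by rw [← pow_two]; exact pd2 m)

lemma pf_inv : (pf m)⁻¹ = pf m :=
  inv_eq_of_mul_eq_one_right (by rw [← pow_two]; exact pf2 m)

lemma pdc_move : pd m * pc m = pc m * (pe m)^(2^m) * pd m := by
  have h1 : (pd m)⁻¹ * pc m * pd m = (pc m)⁻¹ :=
    mul_eq_one_iff_eq_inv.mp (pdcdc m)
  have h2 : pc m * pd m = pd m * (pc m)⁻¹ := by
    have := congrArg (fun z => pd m * z) h1
    simpa [mul_assoc] using this
  have h3 : pd m * pc m = (pc m)⁻¹ * pd m := by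
    have h4 := congrArg (fun z => (pc m)⁻¹ * z * pc m) h2.symm
    simp only [mul_assoc, inv_mul_cancel_left, inv_mul_cancel, mul_one] at h4
    exact h4.symm
  rw [h3, pc_inv, mul_assoc]

/-- normal form set -/
def NF : Set (PG m) :=
  {p | ∃ i j k l : ℕ, i ≤ 1 ∧ j ≤ 1 ∧ l ≤ 1 ∧
    p = (pc m)^i * ((pd m)^j * ((pe m)^k * (pf m)^l))}

lemma Hec (a i : ℕ) : (pe m)^a * (pc m)^i = (pc m)^i * (pe m)^a :=
  (((hce m).symm).pow_pow a i).eq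

lemma Hed (a j : ℕ) : (pe m)^a * (pd m)^j = (pd m)^j * (pe m)^a :=
  (((hde m).symm).pow_pow a j).eq

lemma Hfc (a i : ℕ) : (pf m)^a * (pc m)^i = (pc m)^i * (pf m)^a :=
  (((hcf m).symm).pow_pow a i).eq

lemma Hfd (a j : ℕ) : (pf m)^a * (pd m)^j = (pd m)^j * (pf m)^a :=
  (((hdf m).symm).pow_pow a j).eq

lemma Hfe (a k : ℕ) : (pf m)^a * (pe m)^k = (pe m)^k * (pf m)^a :=
  (((hef m).symm).pow_pow a k).eq

lemma abs_e (a : ℕ) (s : PG m) (hs : s ∈ NF m) : (pe m)^a * s ∈ NF m := by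
  obtain ⟨i, j, k, l, hi, hj, hl, rfl⟩ := hs
  refine ⟨i, j, a + k, l, hi, hj, hl, ?_⟩
  rw [← mul_assoc, Hec, mul_assoc]
  congr 1
  rw [← mul_assoc, Hed, mul_assoc]
  congr 1
  rw [← mul_assoc, ← pow_add]

lemma Hfc1 (i : ℕ) : pf m * (pc m)^i = (pc m)^i * pf m := (((hcf m).symm).pow_right i).eq
lemma Hfd1 (j : ℕ) : pf m * (pd m)^j = (pd m)^j * pf m := (((hdf m).symm).pow_right j).eq
lemma Hfe1 (k : ℕ) : pf m * (pe m)^k = (pe m)^k * pf m := (((hef m).symm).pow_right k).eq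

lemma abs_f (s : PG m) (hs : s ∈ NF m) : pf m * s ∈ NF m := by
  obtain ⟨i, j, k, l, hi, hj, hl, rfl⟩ := hs
  have key : pf m * ((pc m)^i * ((pd m)^j * ((pe m)^k * (pf m)^l))) =
      (pc m)^i * ((pd m)^j * ((pe m)^k * ((pf m)^(l+1)))) := by
    rw [← mul_assoc, Hfc1, mul_assoc]
    congr 1
    rw [← mul_assoc, Hfd1, mul_assoc]
    congr 1
    rw [← mul_assoc, Hfe1, mul_assoc, ← pow_succ']
  rw [key]
  interval_cases l
  · exact ⟨i, j, k, 1, hi, hj, le_refl 1, rfl⟩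
  · refine ⟨i, j, k, 0, hi, hj, Nat.zero_le 1, ?_⟩
    rw [show (pf m)^(1+1) = 1 from pf2 m, pow_zero]

lemma abs_d (s : PG m) (hs : s ∈ NF m) : pd m * s ∈ NF m := by
  obtain ⟨i, j, k, l, hi, hj, hl, rfl⟩ := hs
  interval_cases i
  · rw [pow_zero, one_mul, ← mul_assoc, ← pow_succ']
    interval_cases j
    · exact ⟨0, 1, k, l, Nat.zero_le 1, le_refl 1, hl, by rw [pow_zero, one_mul, pow_one]⟩
    · refine ⟨0, 0, k, l, Nat.zero_le 1, Nat.zero_le 1, hl, ?_⟩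
      rw [show (pd m)^(1+1) = 1 from pd2 m]
      simp only [pow_zero, one_mul]
  · rw [pow_one]
    have key : pd m * (pc m * ((pd m)^j * ((pe m)^k * (pf m)^l))) =
        pc m * ((pd m)^(j+1) * ((pe m)^(2^m + k) * (pf m)^l)) := by
      rw [← mul_assoc, pdc_move, mul_assoc, mul_assoc]
      congr 1
      rw [← mul_assoc (pd m), ← pow_succ']
      rw [← mul_assoc, Hed, mul_assoc]
      congr 1
      rw [← mul_assoc, ← pow_add]
    rw [key]
    interval_cases j
    · exact ⟨1, 1, 2^m + k, l, le_refl 1, le_refl 1, hl, by norm_num⟩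
    · refine ⟨1, 0, 2^m + k, l, le_refl 1, Nat.zero_le 1, hl, ?_⟩
      rw [show (pd m)^(1+1) = 1 from pd2 m]
      simp only [pow_zero, pow_one, one_mul]

lemma abs_c (s : PG m) (hs : s ∈ NF m) : pc m * s ∈ NF m := by
  obtain ⟨i, j, k, l, hi, hj, hl, rfl⟩ := hs
  interval_cases i
  · exact ⟨1, j, k, l, le_refl 1, hj, hl, by rw [pow_zero, one_mul, pow_one]⟩
  · -- c * (c * X) = c^2 * X = e^(2^m) * X
    rw [pow_one, ← mul_assoc, ← pow_two, pc_sq]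
    exact abs_e m (2^m) _ ⟨0, j, k, l, Nat.zero_le 1, hj, hl, by rw [pow_zero, one_mul]⟩

lemma abs_c_inv (s : PG m) (hs : s ∈ NF m) : (pc m)⁻¹ * s ∈ NF m := by
  rw [pc_inv, mul_assoc]
  exact abs_c m _ (abs_e m _ _ hs)

lemma abs_e_inv (s : PG m) (hs : s ∈ NF m) : (pe m)⁻¹ * s ∈ NF m := by
  have h1 : (pe m)⁻¹ = (pe m)^(2^(m+1)-1) := by
    apply inv_eq_of_mul_eq_one_right
    rw [← pow_succ']
    have h2 : (2^(m+1)-1) + 1 = 2^(m+1) := by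
      have := Nat.one_le_two_pow (n := m+1)
      omega
    rw [h2, peN]
  rw [h1]
  exact abs_e m _ _ hs

lemma one_mem_NF : (1 : PG m) ∈ NF m :=
  ⟨0, 0, 0, 0, Nat.zero_le 1, Nat.zero_le 1, Nat.zero_le 1, by simp⟩

lemma gen_range : (Set.range (PresentedGroup.of : Fin 4 → PG m)) =
    {pc m, pd m, pe m, pf m} := by
  ext x
  constructor
  · rintro ⟨i, rfl⟩
    fin_cases i
    · exact Or.inl rfl
    · exact Or.inr (Or.inl rfl)
    · exact Or.inr (Or.inr (Or.inl rfl))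
    · exact Or.inr (Or.inr (Or.inr rfl))
  · rintro (rfl | rfl | rfl | rfl)
    exacts [⟨0, rfl⟩, ⟨1, rfl⟩, ⟨2, rfl⟩, ⟨3, rfl⟩]

lemma all_in_NF (p : PG m) : p ∈ NF m := by
  have htop : p ∈ Subgroup.closure {pc m, pd m, pe m, pf m} := by
    rw [← gen_range, PresentedGroup.closure_range_of]
    trivial
  have main : ∀ q : PG m, q ∈ Subgroup.closure {pc m, pd m, pe m, pf m} →
      (∀ s ∈ NF m, q * s ∈ NF m) ∧ (∀ s ∈ NF m, q⁻¹ * s ∈ NF m) := by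
    intro q hq
    induction hq using Subgroup.closure_induction with
    | mem x hx =>
      rcases hx with rfl | (rfl | (rfl | rfl))
      · exact ⟨abs_c m, abs_c_inv m⟩
      · refine ⟨abs_d m, ?_⟩
        rw [pd_inv]
        exact abs_d m
      · refine ⟨fun s hs => ?_, abs_e_inv m⟩
        have := abs_e m 1 s hs
        rwa [pow_one] at this
      · refine ⟨abs_f m, ?_⟩
        rw [pf_inv]
        exact abs_f m
    | one => refine ⟨fun s hs => ?_, fun s hs => ?_⟩ <;> simpa
    | mul x y hx hy ihx ihy =>
      refine ⟨fun s hs => ?_, fun s hs => ?_⟩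
      · rw [mul_assoc]
        exact ihx.1 _ (ihy.1 _ hs)
      · rw [mul_inv_rev, mul_assoc]
        exact ihy.2 _ (ihx.2 _ hs)
    | inv x hx ihx =>
      refine ⟨fun s hs => ?_, fun s hs => ?_⟩
      · exact ihx.2 _ hs
      · rw [inv_inv]
        exact ihx.1 _ hs
  have := (main p htop).1 1 (one_mem_NF m)
  rwa [mul_one] at this

lemma pow_mod_exp {G : Type*} [Group G] (a : G) (mo k : ℕ) (h : a^mo = 1) :
    a^k = a^(k % mo) := by
  conv_lhs => rw [← Nat.mod_add_div k mo]
  rw [pow_add, pow_mul, h, one_pow, mul_one]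

/-- the word map -/
def Wmap : Fin 2 × Fin 2 × Fin (2^(m+1)) × Fin 2 → PG m := fun q =>
  (pc m)^(q.1 : ℕ) * ((pd m)^(q.2.1 : ℕ) * ((pe m)^(q.2.2.1 : ℕ) * (pf m)^(q.2.2.2 : ℕ)))

lemma Wmap_surj : Function.Surjective (Wmap m) := by
  intro p
  obtain ⟨i, j, k, l, hi, hj, hl, rfl⟩ := all_in_NF m p
  refine ⟨(⟨i, by omega⟩, ⟨j, by omega⟩, ⟨k % 2^(m+1), Nat.mod_lt _ (Nat.pow_pos (by norm_num))⟩, ⟨l, by omega⟩), ?_⟩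
  show (pc m)^i * ((pd m)^j * ((pe m)^(k % 2^(m+1)) * (pf m)^l)) = _
  rw [← pow_mod_exp (pe m) (2^(m+1)) k (peN m)]

/-- cast down to ZMod 4 -/
def rho : Zn m →+* ZMod 4 :=
  ZMod.castHom (show (4:ℕ) ∣ 2^(m+3) by
    rw [show (4:ℕ) = 2^2 by norm_num]
    exact pow_dvd_pow 2 (by omega)) (ZMod 4)

lemma rho_u5 : Units.map (rho m).toMonoidHom (u5 m) = 1 := by
  apply Units.ext
  rw [Units.coe_map]
  show rho m (u5 m : Zn m) = 1
  rw [u5_val]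
  have : ((5:ℕ) : Zn m) = (5 : Zn m) := by push_cast; ring
  rw [← this, map_natCast]
  decide

lemma rho_neg_one : Units.map (rho m).toMonoidHom (-1 : (Zn m)ˣ) = -1 := by
  apply Units.ext
  rw [Units.coe_map]
  show rho m ((-1 : (Zn m)ˣ) : Zn m) = _
  rw [Units.val_neg, Units.val_one, map_neg, map_one, Units.val_neg, Units.val_one]

lemma units_inj (k k' l l' : ℕ) (hk : k < 2^(m+1)) (hk' : k' < 2^(m+1))
    (hl : l < 2) (hl' : l' < 2)
    (h : (u5 m)^k * (-1:(Zn m)ˣ)^l = (u5 m)^k' * (-1:(Zn m)ˣ)^l') : k = k' ∧ l = l' := by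
  have himg := congrArg (Units.map (rho m).toMonoidHom) h
  rw [map_mul, map_mul, map_pow, map_pow, map_pow, map_pow, rho_u5, rho_neg_one,
    one_pow, one_pow, one_mul, one_mul] at himg
  have hll : l = l' := by
    interval_cases l <;> interval_cases l' <;> first | rfl | (exfalso; revert himg; decide)
  subst hll
  have hkk : (u5 m)^k = (u5 m)^k' := by
    have := mul_right_cancel h
    exact this
  constructor
  · have horder := orderOf_u5 m
    have := pow_injOn_Iio_orderOf (x := u5 m)
    rw [horder] at this
    exact this (Set.mem_Iio.mpr hk) (Set.mem_Iio.mpr hk') hkk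
  · rfl

lemma card_units : Fintype.card ((Zn m)ˣ) = 2^(m+2) := by
  rw [ZMod.card_units_eq_totient]
  rw [Nat.totient_prime_pow Nat.prime_two (by omega : 0 < m+3)]
  simp

def Umap : Fin (2^(m+1)) × Fin 2 → (Zn m)ˣ := fun q => (u5 m)^(q.1:ℕ) * (-1:(Zn m)ˣ)^(q.2:ℕ)

lemma Umap_bij : Function.Bijective (Umap m) := by
  rw [Fintype.bijective_iff_injective_and_card]
  constructor
  · rintro ⟨k, l⟩ ⟨k', l'⟩ h
    obtain ⟨h1, h2⟩ := units_inj m k k' l l' k.isLt k'.isLt l.isLt l'.isLt h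
    simp [Prod.ext_iff, Fin.ext_iff, h1, h2]
  · rw [Fintype.card_prod, Fintype.card_fin, Fintype.card_fin, card_units]
    ring

lemma units_gen (u : (Zn m)ˣ) : ∃ k l : ℕ, u = (u5 m)^k * (-1:(Zn m)ˣ)^l := by
  obtain ⟨⟨k, l⟩, hq⟩ := (Umap_bij m).2 u
  exact ⟨k, l, hq.symm⟩

lemma phi_of (x : Fin 4) : phi m (PresentedGroup.of x) = gens m x :=
  PresentedGroup.toGroup.of (hrels m)

lemma phi_surj : Function.Surjective (phi m) := by
  intro g
  obtain ⟨u, b, c, hg⟩ := classify m g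
  obtain ⟨k, l, hu⟩ := units_gen m u
  refine ⟨(PresentedGroup.of 2)^k * (PresentedGroup.of 3)^l * (PresentedGroup.of 1)^b *
    ((PresentedGroup.of 2)^(2^m) * PresentedGroup.of 1 * PresentedGroup.of 0)^c, ?_⟩
  rw [map_mul, map_mul, map_mul, map_pow, map_pow, map_pow, map_pow, map_mul, map_mul,
    map_pow, phi_of, phi_of, phi_of, phi_of]
  have g0 : gens m 0 = CC m := rfl
  have g1 : gens m 1 = DD m := rfl
  have g2 : gens m 2 = scal m (u5 m) := rfl
  have g3 : gens m 3 = scal m (-1) := rfl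
  rw [g0, g1, g2, g3]
  have htt : (scal m (u5 m))^(2^m) * DD m * CC m = tt m := by
    rw [← map_pow]
    exact tt_decomp m
  rw [htt, hg, hu, ← map_pow, ← map_pow, ← map_mul]

lemma pr_unit_gen (k l : ℕ) : pr m (((u5 m)^k * (-1:(Zn m)ˣ)^l : (Zn m)ˣ) : Zn m) = 1 := by
  rw [Units.val_mul, Units.val_pow_eq_pow_val, Units.val_pow_eq_pow_val, map_mul,
    map_pow, map_pow, u5_pr, neg_one_pr, one_pow, one_pow, one_mul]

lemma io_inj (a b : Z2) (h : io m a = io m b) : a = b := by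
  rcases z2_cases a with ha | ha <;> rcases z2_cases b with hb | hb <;> subst ha <;> subst hb
  · rfl
  · rw [io_zero, io_one] at h; exact absurd h.symm (half_ne_zero m)
  · rw [io_zero, io_one] at h; exact absurd h (half_ne_zero m)
  · rfl

def Amap : Fin 2 × Fin 2 × Fin (2^(m+1)) × Fin 2 → AddAut (MM m) := fun q =>
  (CC m)^(q.1:ℕ) * ((DD m)^(q.2.1:ℕ) * scal m (Umap m (q.2.2.1, q.2.2.2)))

lemma Amap_eval1 (i j : Fin 2) (v : (Zn m)ˣ) (hv : pr m (v : Zn m) = 1) :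
    ((CC m)^(i:ℕ) * ((DD m)^(j:ℕ) * scal m v)) (1, 0) = ((v : Zn m), ((i:ℕ) : Z2)) := by
  fin_cases i <;> fin_cases j <;>
    simp [pow_zero, pow_one, addAut_mul_apply, scal_apply, DD_apply, CC_apply,
      io_zero, hv]

lemma Amap_eval2 (i j : Fin 2) (v : (Zn m)ˣ) :
    ((CC m)^(i:ℕ) * ((DD m)^(j:ℕ) * scal m v)) (0, 1) =
      (io m (((i:ℕ) : Z2) + ((j:ℕ) : Z2)), 1) := by
  fin_cases i <;> fin_cases j <;>
    simp [pow_zero, pow_one, addAut_mul_apply, scal_apply, DD_apply, CC_apply,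
      io_zero, io_one, pr_io, map_add, pr_two_pow m (m+1), half_add_half]

lemma Amap_inj : Function.Injective (Amap m) := by
  rintro ⟨i, j, k, l⟩ ⟨i', j', k', l'⟩ h
  rw [Amap, Amap] at h
  have hv : pr m ((Umap m (k, l) : Zn m)) = 1 := pr_unit_gen m k l
  have hv' : pr m ((Umap m (k', l') : Zn m)) = 1 := pr_unit_gen m k' l'
  have h1 := congrArg (fun a => a ((1:Zn m), (0:Z2))) h
  simp only at h1
  rw [Amap_eval1 m i j _ hv, Amap_eval1 m i' j' _ hv'] at h1
  have hval : (Umap m (k, l) : Zn m) = (Umap m (k', l') : Zn m) := congrArg Prod.fst h1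
  have hu : Umap m (k, l) = Umap m (k', l') := Units.ext hval
  have hkl : k = k' ∧ l = l' := by
    have := (Umap_bij m).1 hu
    exact ⟨congrArg Prod.fst this, congrArg Prod.snd this⟩
  have hi2 : ((i:ℕ) : Z2) = ((i':ℕ) : Z2) := congrArg Prod.snd h1
  have hii : i = i' := by fin_cases i <;> fin_cases i' <;> simp_all <;> exact absurd hi2 (by decide)
  have h2 := congrArg (fun a => a ((0:Zn m), (1:Z2))) h
  simp only at h2
  rw [Amap_eval2 m i j, Amap_eval2 m i' j'] at h2
  have hio : io m (((i:ℕ) : Z2) + ((j:ℕ) : Z2)) = io m (((i':ℕ) : Z2) + ((j':ℕ) : Z2)) :=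
    congrArg Prod.fst h2
  have hadd := io_inj m _ _ hio
  have hjj : j = j' := by
    subst hii
    have : ((j:ℕ) : Z2) = ((j':ℕ) : Z2) := by
      have := congrArg (fun z => z - ((i:ℕ) : Z2)) hadd
      simpa using this
    fin_cases j <;> fin_cases j' <;> simp_all <;> exact absurd this (by decide)
  obtain ⟨hkk, hll⟩ := hkl
  subst hii; subst hjj; subst hkk; subst hll
  rfl

lemma phi_bij : Function.Bijective (phi m) := by
  have hfinP : Finite (PG m) := Finite.of_surjective _ (Wmap_surj m)
  rw [Nat.bijective_iff_surjective_and_card]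
  refine ⟨phi_surj m, ?_⟩
  have hPle : Nat.card (PG m) ≤ Nat.card (Fin 2 × Fin 2 × Fin (2^(m+1)) × Fin 2) :=
    Nat.card_le_card_of_surjective _ (Wmap_surj m)
  have hAge : Nat.card (Fin 2 × Fin 2 × Fin (2^(m+1)) × Fin 2) ≤ Nat.card (AddAut (MM m)) :=
    Nat.card_le_card_of_injective _ (Amap_inj m)
  have hAle : Nat.card (AddAut (MM m)) ≤ Nat.card (PG m) :=
    Nat.card_le_card_of_surjective _ (phi_surj m)
  exact le_antisymm (hPle.trans hAge) hAle

/-- the isomorphism on the additive side -/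
noncomputable def theIso : PG m ≃* AddAut (MM m) := MulEquiv.ofBijective (phi m) (phi_bij m)

/-- bridge between MulAut of Multiplicative and AddAut -/
def bridge (A : Type*) [AddCommGroup A] : MulAut (Multiplicative A) ≃* AddAut A where
  toFun f := AddEquiv.toMultiplicative.symm f
  invFun f := AddEquiv.toMultiplicative f
  left_inv _ := rfl
  right_inv _ := rfl
  map_mul' _ _ := rfl

theorem mulAut_zmod_two_pow_presentation' (n : ℕ) (hn : 3 ≤ n) :
    Nonempty (MulAut (Multiplicative (ZMod (2 ^ n) × ZMod 2)) ≃* PresentedGroup (autRels n)) := by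
  obtain ⟨m, rfl⟩ : ∃ m, n = m + 3 := ⟨n - 3, by omega⟩
  exact ⟨(bridge (MM m)).trans (theIso m).symm⟩

end Dev

/-- For `n ≥ 3`, the automorphism group of the abelian group `C_{2^n} × C_2` is isomorphic
to the presented group `⟨c,d,e,f ∣ c⁴, d², d⁻¹cdc, e^(2^(n-2)), c²e^(2^(n-3)),
⁅c,e⁆, ⁅d,e⁆, f², ⁅c,f⁆, ⁅d,f⁆, ⁅e,f⁆⟩`. -/
theorem mulAut_zmod_two_pow_presentation (n : ℕ) (hn : 3 ≤ n) :
    Nonempty (MulAut (Multiplicative (ZMod (2 ^ n) × ZMod 2)) ≃* PresentedGroup (autRels n)) := by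
  exact mulAut_zmod_two_pow_presentation' n hn
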